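/- Let f = y^{γ₊}x^α − b·y^{γ₋}x^β be a non-hyperbolic binomial with α, β of disjoint supports and 0 < |α| ≤ |β|. If ξ ∈ W satisfies ξ_i = 0 for every index i with α_i > 0 or β_i > 0, then Eord_ξ(f) = ord_ξ(f). -/

import Mathlib

open MvPolynomial

noncomputable section

/-- The variable index type: `x`-variables indexed by `Fin s`, `y`-variables by `Fin r`. -/
abbrev BV (s r : ℕ) : Type := Fin s ⊕ Fin r

/-- The polynomial ring `R = K[x_1,…,x_s,y_1,…,y_r]`. -/
abbrev BR (K : Type) [Field K] (s r : ℕ) : Type := MvPolynomial (BV s r) K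

variable (K : Type) [Field K] (s r : ℕ)

/-- `W`: the set of points all of whose `y`-coordinates are nonzero. -/
def Wset : Set (BV s r → K) := {ξ | ∀ j : Fin r, ξ (Sum.inr j) ≠ 0}

/-- `I_ξ`: the ideal generated by the variables vanishing at `ξ`. -/
def Ivan (ξ : BV s r → K) : Ideal (BR K s r) :=
  Ideal.span {p : BR K s r | ∃ i : BV s r, ξ i = 0 ∧ p = X i}

/-- `m_ξ`: the maximal ideal of polynomials vanishing at `ξ`. -/
def mAt (ξ : BV s r → K) : Ideal (BR K s r) := RingHom.ker (eval ξ)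

instance mAt_isMaximal (ξ : BV s r → K) : (mAt K s r ξ).IsMaximal :=
  RingHom.ker_isMaximal_of_surjective _ (fun a => ⟨C a, eval_C a⟩)

/-- `O_ξ`: the localization of `R` at `m_ξ`. -/
abbrev Oloc (ξ : BV s r → K) : Type := Localization.AtPrime (mAt K s r ξ)

/-- The `E`-order of an ideal `J` at a point `ξ`:
`sup { m : J·O_ξ ⊆ (I_ξ·O_ξ)^m }`. -/
def Eord (ξ : BV s r → K) (J : Ideal (BR K s r)) : ℕ∞ :=
  sSup ((fun m : ℕ => (m : ℕ∞)) ''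
    {m : ℕ | J.map (algebraMap (BR K s r) (Oloc K s r ξ)) ≤
      ((Ivan K s r ξ).map (algebraMap (BR K s r) (Oloc K s r ξ))) ^ m})

/-- The order of an ideal `J` at a point `ξ`:
`sup { m : J·O_ξ ⊆ (m_ξ·O_ξ)^m }`. -/
def ordAt (ξ : BV s r → K) (J : Ideal (BR K s r)) : ℕ∞ :=
  sSup ((fun m : ℕ => (m : ℕ∞)) ''
    {m : ℕ | J.map (algebraMap (BR K s r) (Oloc K s r ξ)) ≤
      ((mAt K s r ξ).map (algebraMap (BR K s r) (Oloc K s r ξ))) ^ m})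

/-- `x^α`. -/
def xPow (α : Fin s → ℕ) : BR K s r := ∏ i, X (Sum.inl i) ^ α i

/-- `y^γ` for `γ ∈ ℕ^r`. -/
def yPow (γ : Fin r → ℕ) : BR K s r := ∏ j, X (Sum.inr j) ^ γ j

/-- positive part `γ₊` of `γ ∈ ℤ^r`. -/
def ipos (γ : Fin r → ℤ) : Fin r → ℕ := fun j => (γ j).toNat

/-- negative part `γ₋` of `γ ∈ ℤ^r`. -/
def ineg (γ : Fin r → ℤ) : Fin r → ℕ := fun j => (-(γ j)).toNat

/-- a non-hyperbolic binomial `y^{γ₊}x^α − b·y^{γ₋}x^β`. -/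
def nhb (γ : Fin r → ℤ) (α β : Fin s → ℕ) (b : K) : BR K s r :=
  yPow K s r (ipos r γ) * xPow K s r α - C b * yPow K s r (ineg r γ) * xPow K s r β

/-- a hyperbolic equation `y^{δ₋} − μ·y^{δ₊}`. -/
def hyp (δ : Fin r → ℤ) (μ : K) : BR K s r :=
  yPow K s r (ineg r δ) - C μ * yPow K s r (ipos r δ)

/-- a generator of a binomial ideal:
`x^λ(y^{δ₋} − μ y^{δ₊})` or `x^ν(y^{γ₊}x^α − b y^{γ₋}x^β)` with `α,β` of disjoint supports. -/
def IsBinomGen (g : BR K s r) : Prop :=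
  (∃ (lam : Fin s → ℕ) (δ : Fin r → ℤ) (μ : K),
      g = xPow K s r lam * hyp K s r δ μ) ∨
  (∃ (ν α β : Fin s → ℕ) (γ : Fin r → ℤ) (b : K),
      (∀ i, α i = 0 ∨ β i = 0) ∧ g = xPow K s r ν * nhb K s r γ α β b)

/-- a binomial ideal: an ideal generated by finitely many binomial generators. -/
def IsBinomialIdeal (J : Ideal (BR K s r)) : Prop :=
  ∃ S : Finset (BR K s r), (∀ g ∈ S, IsBinomGen K s r g) ∧ J = Ideal.span (S : Set (BR K s r))

open Classical in
/-- `|ν|_ξ = Σ_{i : ξ_i = 0} ν_i` (sum over vanishing x-coordinates). -/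
def nsumAt (ξ : BV s r → K) (ν : Fin s → ℕ) : ℕ :=
  ∑ i, if ξ (Sum.inl i) = 0 then ν i else 0


/-- `Option A ⊕ B ≃ Option (A ⊕ B)`. -/
def optSum (A B : Type) : Option A ⊕ B ≃ Option (A ⊕ B) :=
  ((Equiv.optionEquivSumPUnit A).sumCongr (Equiv.refl B)).trans <|
    (Equiv.sumAssoc A PUnit.{1} B).trans <|
      ((Equiv.refl A).sumCongr (Equiv.sumComm PUnit.{1} B)).trans <|
        (Equiv.sumAssoc A B PUnit.{1}).symm.trans
          (Equiv.optionEquivSumPUnit (A ⊕ B)).symm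

/-- The variables of `K[x_1,…,x_{s+1},y]` split as the variable `x_1` (the `none` case)
and the variables of `K[x_2,…,x_{s+1},y]`. -/
def varEquiv : BV (s + 1) r ≃ Option (BV s r) :=
  ((finSuccEquiv s).sumCongr (Equiv.refl (Fin r))).trans (optSum (Fin s) (Fin r))

/-- Identification of `R = K[x_1,…,x_{s+1},y]` with `R'[x_1]`, `R' = K[x_2,…,x_{s+1},y]`. -/
def toPoly : BR K (s + 1) r ≃ₐ[K] Polynomial (BR K s r) :=
  (renameEquiv K (varEquiv s r)).trans (optionEquivLeft K (BV s r))

/-- `a_{f,k}`: the coefficient of `x_1^k` in `f` under the identification `R = R'[x_1]`. -/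
def coeffAt (f : BR K (s + 1) r) (k : ℕ) : BR K s r :=
  (toPoly K s r f).coeff k

/-- The coefficient ideal `C(P,c)` of `P` along `E` with respect to `V = {x_1 = 0}`,
with factorial normalization: it is generated by the `a_{f,k}^{c!/(c-k)}`, `f ∈ P`, `k < c`. -/
def coeffIdeal (P : Ideal (BR K (s + 1) r)) (c : ℕ) : Ideal (BR K s r) :=
  Ideal.span {g : BR K s r |
    ∃ f ∈ P, ∃ k < c, g = coeffAt K s r f k ^ (Nat.factorial c / (c - k))}

/-- `ξ'`: the point `ξ` with its first (`x_1`) coordinate removed. -/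
def resPt (ξ : BV (s + 1) r → K) : BV s r → K :=
  fun v => match v with
  | Sum.inl i => ξ (Sum.inl i.succ)
  | Sum.inr j => ξ (Sum.inr j)

open Classical in
/-- The chart morphism `σ_j` of the blow-up along `Z = ∩_{i ∈ I} {x_i = 0}`:
`x_i ↦ x_i·x_j` for `i ∈ I ∖ {j}`, all other variables are fixed. -/
def chart (I : Finset (Fin s)) (j : Fin s) : BR K s r →ₐ[K] BR K s r :=
  aeval (fun v : BV s r => match v with
    | Sum.inl i => if i ∈ I ∧ i ≠ j then X (Sum.inl i) * X (Sum.inl j) else X (Sum.inl i)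
    | Sum.inr k => X (Sum.inr k))

end

noncomputable section AuxProof

open MvPolynomial

variable {K : Type} [Field K] {s r : ℕ}

/-- coefficients of degree `< N` of elements of `m₀^N` vanish. -/
theorem aux_coeff_eq_zero {σ : Type} (N : ℕ) :
    ∀ p : MvPolynomial σ K, p ∈ (RingHom.ker (eval (0 : σ → K)) : Ideal (MvPolynomial σ K)) ^ N →
    ∀ d : σ →₀ ℕ, (d.sum fun _ k => k) < N → coeff d p = 0 := by
  classical
  induction N with
  | zero => exact fun p _ d hd => absurd hd (Nat.not_lt_zero _)
  | succ N ih =>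
    intro p hp
    rw [pow_succ] at hp
    refine Submodule.mul_induction_on hp ?_ ?_
    · intro a ha b hb d hd
      rw [coeff_mul]
      apply Finset.sum_eq_zero
      rintro ⟨u, v⟩ huv
      rw [Finset.HasAntidiagonal.mem_antidiagonal] at huv
      by_cases hu : (u.sum fun _ k => k) < N
      · simp [ih a ha u hu]
      · have hsum : (u.sum fun _ k => k) + (v.sum fun _ k => k) = d.sum fun _ k => k := by
          rw [← huv]
          exact (Finsupp.sum_add_index' (fun _ => rfl) (fun _ _ _ => rfl)).symm
        have hv : v = 0 := by
          ext a'
          by_contra h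
          have ha' : a' ∈ v.support := Finsupp.mem_support_iff.mpr h
          have hpos : 0 < v.sum fun _ k => k :=
            Finset.sum_pos' (fun _ _ => Nat.zero_le _) ⟨a', ha', Nat.pos_of_ne_zero h⟩
          omega
        have hb0 : coeff v b = 0 := by
          rw [hv]
          have := RingHom.mem_ker.mp hb
          rwa [eval_zero, constantCoeff_eq] at this
        simp [hb0]
    · intro x y hx hy d hd
      simp [coeff_add, hx d hd, hy d hd]

/-- the translation homomorphism `X v ↦ X v + ξ v`. -/
def shiftHom {σ : Type} (ξ : σ → K) : MvPolynomial σ K →ₐ[K] MvPolynomial σ K :=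
  aeval (fun v => X v + C (ξ v))

theorem shiftHom_X {σ : Type} (ξ : σ → K) (v : σ) :
    shiftHom ξ (X v) = X v + C (ξ v) :=
  aeval_X _ v

theorem shiftHom_C {σ : Type} (ξ : σ → K) (a : K) :
    shiftHom ξ (C a) = C a := by
  simp [shiftHom, algebraMap_eq]

theorem eval_zero_shiftHom {σ : Type} (ξ : σ → K) (g : MvPolynomial σ K) :
    eval (0 : σ → K) (shiftHom ξ g) = eval ξ g := by
  have h : (eval (0 : σ → K)).comp
      ((shiftHom ξ : MvPolynomial σ K →ₐ[K] MvPolynomial σ K) :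
        MvPolynomial σ K →+* MvPolynomial σ K) = eval ξ := by
    apply MvPolynomial.ringHom_ext
    · intro a
      simp [RingHom.comp_apply, shiftHom_C]
    · intro v
      simp [RingHom.comp_apply, shiftHom_X]
  exact RingHom.congr_fun h g

theorem shiftHom_mem_pow {σ : Type} (ξ : σ → K) {f : MvPolynomial σ K} {N : ℕ}
    (hf : f ∈ (RingHom.ker (eval ξ) : Ideal (MvPolynomial σ K)) ^ N) :
    shiftHom ξ f ∈ (RingHom.ker (eval (0 : σ → K)) : Ideal (MvPolynomial σ K)) ^ N := by
  have h1 : (RingHom.ker (eval ξ) : Ideal (MvPolynomial σ K)).map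
      (shiftHom ξ : MvPolynomial σ K →+* MvPolynomial σ K) ≤ RingHom.ker (eval (0 : σ → K)) := by
    rw [Ideal.map_le_iff_le_comap]
    intro g hg
    rw [RingHom.mem_ker] at hg
    rw [Ideal.mem_comap, RingHom.mem_ker]
    show eval (0 : σ → K) (shiftHom ξ g) = 0
    rw [eval_zero_shiftHom, hg]
  have h2 : shiftHom ξ f ∈ ((RingHom.ker (eval ξ) : Ideal (MvPolynomial σ K)) ^ N).map
      (shiftHom ξ : MvPolynomial σ K →+* MvPolynomial σ K) := Ideal.mem_map_of_mem _ hf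
  rw [Ideal.map_pow] at h2
  exact Ideal.pow_right_mono h1 N h2

variable (s r) in
/-- the exponent finsupp of `x^α`. -/
def dof (α : Fin s → ℕ) : BV s r →₀ ℕ :=
  Finsupp.equivFunOnFinite.symm (Sum.elim α 0)

theorem dof_apply (α : Fin s → ℕ) (v : BV s r) : dof s r α v = Sum.elim α 0 v := rfl

theorem xPow_eq_monomial (α : Fin s → ℕ) :
    xPow K s r α = monomial (dof s r α) 1 := by
  rw [monomial_eq, C_1, one_mul, Finsupp.prod_fintype _ _ (fun _ => pow_zero _)]
  rw [Fintype.prod_sum_type]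
  simp only [dof_apply, Sum.elim_inl, Sum.elim_inr, Pi.zero_apply, pow_zero,
    Finset.prod_const_one, mul_one]
  rfl

theorem dof_degree (α : Fin s → ℕ) :
    ((dof s r α).sum fun _ k => k) = ∑ i, α i := by
  rw [Finsupp.sum_fintype _ _ (fun _ => rfl), Fintype.sum_sum_type]
  simp [dof_apply, Pi.zero_apply]

theorem xPow_mem_pow (ν : Fin s → ℕ) {I : Ideal (BR K s r)}
    (h : ∀ i, 0 < ν i → (X (Sum.inl i) : BR K s r) ∈ I) :
    xPow K s r ν ∈ I ^ (∑ i, ν i) := by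
  rw [← Finset.prod_pow_eq_pow_sum]
  refine Ideal.prod_mem_prod fun i _ => ?_
  by_cases hi : ν i = 0
  · simp [hi]
  · exact Ideal.pow_mem_pow (h i (Nat.pos_of_ne_zero hi)) _

theorem shiftHom_yPow (ξ : BV s r → K) (e : Fin r → ℕ) :
    shiftHom ξ (yPow K s r e) =
      rename Sum.inr (∏ j, (X j + C (ξ (Sum.inr j))) ^ e j : MvPolynomial (Fin r) K) := by
  rw [yPow, map_prod, map_prod]
  refine Finset.prod_congr rfl fun j _ => ?_
  rw [map_pow, map_pow, shiftHom_X, map_add, rename_X, rename_C]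

theorem constantCoeff_yprod (c : Fin r → K) (e : Fin r → ℕ) :
    constantCoeff (∏ j, (X j + C (c j)) ^ e j : MvPolynomial (Fin r) K) = ∏ j, (c j) ^ e j := by
  rw [map_prod]
  refine Finset.prod_congr rfl fun j _ => ?_
  rw [map_pow, map_add, constantCoeff_X, constantCoeff_C, zero_add]

theorem coeff_rename_inr_zero_of_x (P : MvPolynomial (Fin r) K) (d : BV s r →₀ ℕ)
    (i0 : Fin s) (hd : d (Sum.inl i0) ≠ 0) :
    coeff d (rename (Sum.inr : Fin r → BV s r) P) = 0 := by
  by_contra h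
  obtain ⟨u, hu, -⟩ := coeff_rename_ne_zero _ _ _ h
  apply hd
  rw [← hu]
  exact Finsupp.mapDomain_notin_range u _ (by rintro ⟨j, hj⟩; cases hj)

end AuxProof

/-- for a non-hyperbolic binomial `f = y^{γ₊}x^α − b·y^{γ₋}x^β` with disjoint
supports and `0 < |α| ≤ |β|`, if `ξ ∈ W` has `ξ_i = 0` for every `i` with `α_i > 0` or
`β_i > 0`, then `Eord_ξ(f) = ord_ξ(f)`. -/
theorem Eord_eq_ord_of_vanishing_support
    (K : Type) [Field K] [IsAlgClosed K] (s r : ℕ)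
    (γ : Fin r → ℤ) (α β : Fin s → ℕ) (b : K)
    (hdisj : ∀ i, α i = 0 ∨ β i = 0)
    (hα : 0 < ∑ i, α i) (hαβ : ∑ i, α i ≤ ∑ i, β i)
    (ξ : BV s r → K) (hξ : ξ ∈ Wset K s r)
    (hvan : ∀ i, (0 < α i ∨ 0 < β i) → ξ (Sum.inl i) = 0) :
    Eord K s r ξ (Ideal.span {nhb K s r γ α β b}) =
      ordAt K s r ξ (Ideal.span {nhb K s r γ α β b}) := by
  classical
  set f := nhb K s r γ α β b with hfdef
  set n := ∑ i, α i with hndef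
  have hξ' : ∀ j, ξ (Sum.inr j) ≠ 0 := hξ
  -- I_ξ ≤ m_ξ
  have hIm : Ivan K s r ξ ≤ mAt K s r ξ := by
    rw [Ivan, Ideal.span_le]
    rintro p ⟨i, hi, rfl⟩
    show eval ξ (X i) = 0
    rw [eval_X, hi]
  -- f ∈ I_ξ ^ n
  have hXmem : ∀ i : Fin s, (0 < α i ∨ 0 < β i) →
      (X (Sum.inl i) : BR K s r) ∈ Ivan K s r ξ := by
    intro i hi
    rw [Ivan]
    exact Ideal.subset_span ⟨Sum.inl i, hvan i hi, rfl⟩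
  have hxα : xPow K s r α ∈ (Ivan K s r ξ) ^ n :=
    xPow_mem_pow α (fun i hi => hXmem i (Or.inl hi))
  have hxβ : xPow K s r β ∈ (Ivan K s r ξ) ^ n :=
    Ideal.pow_le_pow_right hαβ (xPow_mem_pow β (fun i hi => hXmem i (Or.inr hi)))
  have hfI : f ∈ (Ivan K s r ξ) ^ n := by
    rw [hfdef, nhb]
    exact Ideal.sub_mem _ (Ideal.mul_mem_left _ _ hxα) (Ideal.mul_mem_left _ _ hxβ)
  have hnE : (Ideal.span {f}).map (algebraMap (BR K s r) (Oloc K s r ξ)) ≤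
      ((Ivan K s r ξ).map (algebraMap (BR K s r) (Oloc K s r ξ))) ^ n := by
    rw [← Ideal.map_pow]
    exact Ideal.map_mono (by rw [Ideal.span_le, Set.singleton_subset_iff]; exact hfI)
  -- key fact : f ∉ m_ξ ^ (n+1)
  obtain ⟨i0, hi0⟩ : ∃ i, α i ≠ 0 := by
    by_contra h
    push_neg at h
    rw [hndef] at hα
    simp [h] at hα
  have hfnot : f ∉ (mAt K s r ξ) ^ (n + 1) := by
    intro hmem
    have h3 : coeff (dof s r α) (shiftHom ξ f) = 0 :=
      aux_coeff_eq_zero (n + 1) _ (shiftHom_mem_pow ξ hmem) _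
        (by rw [dof_degree]; omega)
    -- compute the shifted polynomial
    have hA : shiftHom ξ (xPow K s r α) = xPow K s r α := by
      rw [xPow, map_prod]
      refine Finset.prod_congr rfl fun i _ => ?_
      rw [map_pow, shiftHom_X]
      by_cases hi : α i = 0
      · rw [hi, pow_zero, pow_zero]
      · rw [hvan i (Or.inl (Nat.pos_of_ne_zero hi)), C_0, add_zero]
    have hB : shiftHom ξ (xPow K s r β) = xPow K s r β := by
      rw [xPow, map_prod]
      refine Finset.prod_congr rfl fun i _ => ?_
      rw [map_pow, shiftHom_X]
      by_cases hi : β i = 0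
      · rw [hi, pow_zero, pow_zero]
      · rw [hvan i (Or.inr (Nat.pos_of_ne_zero hi)), C_0, add_zero]
    set A0 : MvPolynomial (Fin r) K :=
      ∏ j, (X j + C (ξ (Sum.inr j))) ^ (ipos r γ j) with hA0
    set B0 : MvPolynomial (Fin r) K :=
      ∏ j, (X j + C (ξ (Sum.inr j))) ^ (ineg r γ j) with hB0
    have hsf : shiftHom ξ f = rename Sum.inr A0 * xPow K s r α
        - C b * rename Sum.inr B0 * xPow K s r β := by
      rw [hfdef, nhb, map_sub, map_mul, map_mul, map_mul, shiftHom_yPow, shiftHom_yPow,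
        hA, hB, shiftHom_C]
    have hc0 : coeff (0 : BV s r →₀ ℕ) (rename (Sum.inr : Fin r → BV s r) A0) =
        ∏ j, (ξ (Sum.inr j)) ^ (ipos r γ j) := by
      have h4 := coeff_rename_mapDomain (Sum.inr : Fin r → BV s r) Sum.inr_injective A0 0
      rw [Finsupp.mapDomain_zero] at h4
      rw [h4, ← constantCoeff_yprod (fun j => ξ (Sum.inr j)) (ipos r γ), hA0,
        constantCoeff_eq]
    have hsecond : (if dof s r β ≤ dof s r α then
        coeff (dof s r α - dof s r β) (C b * rename Sum.inr B0) * 1 else 0) = 0 := by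
      split_ifs with hle
      · have hβ0 : β i0 = 0 := (hdisj i0).resolve_left hi0
        have hne : (dof s r α - dof s r β) (Sum.inl i0) ≠ 0 := by
          rw [Finsupp.tsub_apply, dof_apply, dof_apply]
          simpa [hβ0] using hi0
        rw [mul_one, show (C b : BR K s r) = rename Sum.inr (C b) from (rename_C _ b).symm,
          ← map_mul]
        exact coeff_rename_inr_zero_of_x _ _ i0 hne
      · rfl
    rw [hsf, coeff_sub, xPow_eq_monomial, xPow_eq_monomial, coeff_mul_monomial',
      coeff_mul_monomial', if_pos le_rfl, tsub_self, hc0, hsecond, mul_one, sub_zero] at h3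
    have hne0 : (∏ j, ξ (Sum.inr j) ^ ipos r γ j) ≠ 0 :=
      Finset.prod_ne_zero_iff.mpr fun j _ => pow_ne_zero _ (hξ' j)
    exact hne0 h3
  -- every element of the ord-defining set is ≤ n
  have hOle : ∀ m : ℕ,
      (Ideal.span {f}).map (algebraMap (BR K s r) (Oloc K s r ξ)) ≤
        ((mAt K s r ξ).map (algebraMap (BR K s r) (Oloc K s r ξ))) ^ m → m ≤ n := by
    intro m hm
    by_contra hc
    push_neg at hc
    have hfm : algebraMap (BR K s r) (Oloc K s r ξ) f ∈
        ((mAt K s r ξ) ^ (n + 1)).map (algebraMap (BR K s r) (Oloc K s r ξ)) := by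
      rw [Ideal.map_pow]
      exact Ideal.pow_le_pow_right hc
        (hm (Ideal.mem_map_of_mem _ (Ideal.subset_span rfl)))
    rw [IsLocalization.mem_map_algebraMap_iff (mAt K s r ξ).primeCompl (Oloc K s r ξ)] at hfm
    obtain ⟨⟨a, u⟩, hau⟩ := hfm
    have hinj : Function.Injective (algebraMap (BR K s r) (Oloc K s r ξ)) :=
      IsLocalization.injective _ ((mAt K s r ξ).primeCompl_le_nonZeroDivisors)
    have heq : f * (u : BR K s r) = (a : BR K s r) := hinj (by rw [map_mul]; exact hau)
    have hprimary : ((mAt K s r ξ) ^ (n + 1)).IsPrimary := by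
      apply Ideal.isPrimary_of_isMaximal_radical
      rw [Ideal.radical_pow _ (Nat.succ_ne_zero n),
        Ideal.IsPrime.radical (mAt_isMaximal K s r ξ).isPrime]
      exact mAt_isMaximal K s r ξ
    have hfu : f * (u : BR K s r) ∈ (mAt K s r ξ) ^ (n + 1) := by rw [heq]; exact a.2
    rcases (Ideal.isPrimary_iff.mp hprimary).2 hfu with h | h
    · exact hfnot h
    · rw [Ideal.radical_pow _ (Nat.succ_ne_zero n),
        Ideal.IsPrime.radical (mAt_isMaximal K s r ξ).isPrime] at h
      exact u.2 h
  -- assemble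
  rw [Eord, ordAt]
  apply le_antisymm
  · apply sSup_le_sSup
    apply Set.image_mono
    intro m hm
    exact le_trans hm (Ideal.pow_right_mono (Ideal.map_mono hIm) m)
  · have h1 : sSup ((fun m : ℕ => (m : ℕ∞)) ''
        {m : ℕ | (Ideal.span {f}).map (algebraMap (BR K s r) (Oloc K s r ξ)) ≤
          ((mAt K s r ξ).map (algebraMap (BR K s r) (Oloc K s r ξ))) ^ m}) ≤ (n : ℕ∞) := by
      apply sSup_le
      rintro x ⟨m, hm, rfl⟩
      show (m : ℕ∞) ≤ (n : ℕ∞)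
      exact_mod_cast hOle m hm
    exact le_trans h1 (le_sSup ⟨n, hnE, rfl⟩)
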